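/- Let r > 0, fix signs ε, ε_B, δ ∈ {−1, 1}, let μ : ℝ → ℝ be one of the functions t ↦ δ·cos t, t ↦ δ·cosh t, t ↦ sinh t, and let κ : ℝ → ℝ satisfy the Lorentzian regularity condition, with κ not identically zero. Then for every Q ∈ ℝ[X,Y]: Q(K(s,t), H(s,t)) = 0 for all s, t ∈ ℝ if and only if the polynomial r²·X − 2r·Y + ε divides Q. -/

import Mathlib

open MvPolynomial

theorem stmt_17 (r : ℝ) (hr : 0 < r)
    (ε εB δ : ℝ) (hε : ε = -1 ∨ ε = 1) (hεB : εB = -1 ∨ εB = 1) (hδ : δ = -1 ∨ δ = 1)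
    (μ : ℝ → ℝ)
    (hμ : (∀ t, μ t = δ * Real.cos t) ∨ (∀ t, μ t = δ * Real.cosh t) ∨
      (∀ t, μ t = Real.sinh t))
    (κ : ℝ → ℝ) (hreg : ∀ s t : ℝ, 1 + εB * r * κ s * μ t ≠ 0)
    (hκ : ¬ ∀ s, κ s = 0) (Q : MvPolynomial (Fin 2) ℝ) :
    (∀ s t : ℝ,
        eval ![ε * εB * κ s * μ t / (r * (1 + εB * r * κ s * μ t)),
          ε * (2 * εB * r * κ s * μ t + 1) / (2 * r * (1 + εB * r * κ s * μ t))] Q = 0) ↔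
      (C (r ^ 2) * X 0 - C (2 * r) * X 1 + C ε) ∣ Q := by
  have hr0 : r ≠ 0 := ne_of_gt hr
  set P : MvPolynomial (Fin 2) ℝ := C (r ^ 2) * X 0 - C (2 * r) * X 1 + C ε with hP
  constructor
  · intro hvan
    -- the substitution map
    set L : Polynomial ℝ := Polynomial.C (r/2) * Polynomial.X + Polynomial.C (ε/(2*r)) with hL
    set φ : MvPolynomial (Fin 2) ℝ →ₐ[ℝ] Polynomial ℝ := aeval ![Polynomial.X, L] with hφ
    -- evaluation of φ Q at K-values equals eval of Q at (K, H)
    have heval : ∀ x : ℝ, (φ Q).eval x = eval ![x, r/2 * x + ε/(2*r)] Q := by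
      intro x
      have key : (Polynomial.aeval x).comp φ = (aeval ![x, r/2 * x + ε/(2*r)] :
          MvPolynomial (Fin 2) ℝ →ₐ[ℝ] ℝ) := by
        apply MvPolynomial.algHom_ext
        intro i
        fin_cases i <;> simp [hφ, hL]
      have h2 := congrArg (fun f => f Q) key
      simp only [AlgHom.comp_apply] at h2
      rw [← Polynomial.coe_aeval_eq_eval]
      rw [h2, ← MvPolynomial.coe_aeval_eq_eval]
      rfl
    -- φ Q vanishes at all K-values
    have hroot : ∀ s t : ℝ, (φ Q).IsRoot (ε * εB * κ s * μ t / (r * (1 + εB * r * κ s * μ t))) := by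
      intro s t
      have h1 : 1 + εB * r * κ s * μ t ≠ 0 := hreg s t
      have hH : r/2 * (ε * εB * κ s * μ t / (r * (1 + εB * r * κ s * μ t))) + ε/(2*r)
          = ε * (2 * εB * r * κ s * μ t + 1) / (2 * r * (1 + εB * r * κ s * μ t)) := by
        have h1' : 1 + r * εB * κ s * μ t ≠ 0 := by rwa [mul_comm r εB]
        field_simp
        ring
      unfold Polynomial.IsRoot
      rw [heval, hH]
      exact hvan s t
    -- κ s₀ ≠ 0 for some s₀
    obtain ⟨s₀, hs₀⟩ : ∃ s, κ s ≠ 0 := by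
      by_contra h
      push_neg at h
      exact hκ h
    set c : ℝ := κ s₀ with hc
    have hεne : ε ≠ 0 := by rcases hε with h | h <;> simp [h]
    have hεBne : εB ≠ 0 := by rcases hεB with h | h <;> simp [h]
    have hδne : δ ≠ 0 := by rcases hδ with h | h <;> simp [h]
    -- the map t ↦ K(s₀,t) is injective on sets where μ is injective
    set g : ℝ → ℝ := fun t => ε * εB * c * μ t / (r * (1 + εB * r * c * μ t)) with hg
    have hginj : ∀ t₁ t₂ : ℝ, μ t₁ ≠ μ t₂ → g t₁ ≠ g t₂ := by
      intro t₁ t₂ hne hfe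
      have h1 : r * (1 + εB * r * c * μ t₁) ≠ 0 := mul_ne_zero hr0 (hreg s₀ t₁)
      have h2 : r * (1 + εB * r * c * μ t₂) ≠ 0 := mul_ne_zero hr0 (hreg s₀ t₂)
      simp only [hg] at hfe
      rw [div_eq_div_iff h1 h2] at hfe
      have h3 : ε * εB * c * r * (μ t₁ - μ t₂) = 0 := by linear_combination hfe
      have hcne : ε * εB * c * r ≠ 0 :=
        mul_ne_zero (mul_ne_zero (mul_ne_zero hεne hεBne) hs₀) hr0
      rcases mul_eq_zero.mp h3 with h | h
      · exact hcne h
      · exact hne (sub_eq_zero.mp h)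
    -- an infinite set on which μ is injective
    obtain ⟨T, hTinf, hTμ⟩ : ∃ T : Set ℝ, T.Infinite ∧ Set.InjOn μ T := by
      rcases hμ with h | h | h
      · refine ⟨Set.Icc 0 Real.pi, Set.Icc_infinite Real.pi_pos, ?_⟩
        intro a ha b hb hab
        rw [h a, h b] at hab
        exact Real.injOn_cos ha hb (mul_left_cancel₀ hδne hab)
      · refine ⟨Set.Ici 0, Set.Ici_infinite 0, ?_⟩
        intro a ha b hb hab
        rw [h a, h b] at hab
        exact Real.cosh_strictMonoOn.injOn ha hb (mul_left_cancel₀ hδne hab)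
      · refine ⟨Set.univ, Set.infinite_univ, ?_⟩
        intro a _ b _ hab
        rw [h a, h b] at hab
        exact Real.sinh_injective hab
    -- φ Q has infinitely many roots, hence is zero
    have hφQ : φ Q = 0 := by
      apply Polynomial.eq_zero_of_infinite_isRoot
      have hsub : g '' T ⊆ {x | (φ Q).IsRoot x} := by
        rintro x ⟨t, _, rfl⟩
        exact hroot s₀ t
      refine Set.Infinite.mono hsub (Set.Infinite.image ?_ hTinf)
      intro a ha b hb hab
      by_contra hne
      exact hginj a b (fun hm => hne (hTμ ha hb hm)) hab
    -- P divides q - (aeval X0) (φ q) for every q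
    have hdvdX1 : P ∣ (X 1 - (C (r/2) * X 0 + C (ε/(2*r))) : MvPolynomial (Fin 2) ℝ) := by
      refine ⟨C (-(1/(2*r))), ?_⟩
      have e1 : r ^ 2 * -(1/(2*r)) = -(r/2) := by field_simp
      have e2 : 2 * r * -(1/(2*r)) = -1 := by field_simp
      have e3 : ε * -(1/(2*r)) = -(ε/(2*r)) := by field_simp
      rw [hP, add_mul, sub_mul, mul_right_comm (C (r^2)) (X 0), mul_right_comm (C (2*r)) (X 1),
        ← C_mul, ← C_mul, ← C_mul, e1, e2, e3]
      simp only [C_neg, C_1]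
      ring
    have hτ : ∀ q : MvPolynomial (Fin 2) ℝ,
        P ∣ q - (Polynomial.aeval (X 0 : MvPolynomial (Fin 2) ℝ)) (φ q) := by
      intro q
      induction q using MvPolynomial.induction_on with
      | C a => simp [hφ]
      | add p q hp hq =>
          have := dvd_add hp hq
          convert this using 1
          simp only [map_add]
          ring
      | mul_X p i hp =>
          have hXi : P ∣ (X i - (Polynomial.aeval (X 0 : MvPolynomial (Fin 2) ℝ)) (φ (X i))) := by
            fin_cases i
            · simp [hφ]
            · show P ∣ X 1 - (Polynomial.aeval (X 0 : MvPolynomial (Fin 2) ℝ)) (φ (X 1))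
              have : (Polynomial.aeval (X 0 : MvPolynomial (Fin 2) ℝ)) (φ (X 1))
                  = C (r/2) * X 0 + C (ε/(2*r)) := by
                simp [hφ, hL, MvPolynomial.algebraMap_eq]
              rw [this]
              exact hdvdX1
          have h4 : p * X i - (Polynomial.aeval (X 0 : MvPolynomial (Fin 2) ℝ)) (φ (p * X i))
              = (p - (Polynomial.aeval (X 0 : MvPolynomial (Fin 2) ℝ)) (φ p)) * X i
                + (Polynomial.aeval (X 0 : MvPolynomial (Fin 2) ℝ)) (φ p) *
                  (X i - (Polynomial.aeval (X 0 : MvPolynomial (Fin 2) ℝ)) (φ (X i))) := by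
            simp only [map_mul]
            ring
          rw [h4]
          exact dvd_add (Dvd.dvd.mul_right hp _) (Dvd.dvd.mul_left hXi _)
    have := hτ Q
    rwa [hφQ, map_zero, sub_zero] at this
  · rintro ⟨R, rfl⟩
    intro s t
    have h1 : 1 + εB * r * κ s * μ t ≠ 0 := hreg s t
    rw [map_mul]
    have : eval ![ε * εB * κ s * μ t / (r * (1 + εB * r * κ s * μ t)),
          ε * (2 * εB * r * κ s * μ t + 1) / (2 * r * (1 + εB * r * κ s * μ t))] P = 0 := by
      simp only [hP, map_add, map_sub, map_mul, eval_C, eval_X, Matrix.cons_val_zero,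
        Matrix.cons_val_one, Matrix.head_cons]
      have h1' : 1 + r * εB * κ s * μ t ≠ 0 := by rwa [mul_comm r εB]
      field_simp
      ring
    rw [this, zero_mul]
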